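/- For every n×n principal multiplier matrix T over a ring R, there exists a multiplier system Σ = {s_ijk} with all s_ijk ∈ {0,1} such that s_iji = t_ij for all i,j; that is, every abstract principal multiplier matrix is realized as the principal multiplier matrix of some (01)-formal matrix ring over R. -/
import Mathlib


/-- Theorem 3.1, realization: Every abstract principal multiplier
matrix `T` is the principal multiplier matrix of some (01)-formal matrix ring
over `R`: there is a (01)-multiplier system `s` with `s i j i = T i j`. -/
theorem realization_of_principal_multiplier_matrix {R : Type*} [Ring R] [Nontrivial R]
    (n : ℕ) (T : Matrix (Fin n) (Fin n) R)
    (h01 : ∀ i j, T i j = 0 ∨ T i j = 1)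
    (hsymm : ∀ i j, T i j = T j i)
    (hdiag : ∀ i, T i i = 1)
    (htriple : ∀ i j k : Fin n, i ≠ j → j ≠ k → k ≠ i →
      (T i j = 1 ∧ T j k = 1 ∧ T k i = 1) ∨
      (T i j = 0 ∧ T j k = 0) ∨ (T j k = 0 ∧ T k i = 0) ∨ (T i j = 0 ∧ T k i = 0)) :
    ∃ s : Fin n → Fin n → Fin n → R,
      (∀ i j k, s i j k = 0 ∨ s i j k = 1) ∧
      (∀ i j k (r : R), s i j k * r = r * s i j k) ∧
      (∀ i k, s i i k = 1) ∧ (∀ i k, s i k k = 1) ∧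
      (∀ i j k l, s i j k * s i k l = s i j l * s j k l) ∧
      (∀ i j, s i j i = T i j) := by
  classical
  -- transitivity of the relation `T · · = 1`
  have htrans : ∀ i j k : Fin n, T i j = 1 → T j k = 1 → T i k = 1 := by
    intro i j k hij hjk
    by_cases h1 : i = j
    · subst h1; exact hjk
    by_cases h2 : j = k
    · subst h2; exact hij
    by_cases h3 : k = i
    · subst h3; exact hdiag k
    rcases htriple i j k h1 h2 h3 with ⟨_, _, h⟩ | ⟨h, _⟩ | ⟨h, _⟩ | ⟨h, _⟩
    · rw [hsymm]; exact h
    all_goals first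
      | (exfalso; rw [h] at hij; exact zero_ne_one hij)
      | (exfalso; rw [h] at hjk; exact zero_ne_one hjk)
  -- the class function
  have hne : ∀ i : Fin n, (Finset.univ.filter (fun j => T j i = 1)).Nonempty := by
    intro i
    exact ⟨i, by simp [hdiag i]⟩
  set σ : Fin n → ℕ := fun i => ((Finset.univ.filter (fun j => T j i = 1)).min' (hne i)).val
    with hσ
  have hσ_iff : ∀ i j, σ i = σ j ↔ T i j = 1 := by
    intro i j
    constructor
    · intro h
      have hi := Finset.min'_mem _ (hne i)
      have hj := Finset.min'_mem _ (hne j)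
      simp only [Finset.mem_filter] at hi hj
      have : (Finset.univ.filter (fun x => T x i = 1)).min' (hne i)
          = (Finset.univ.filter (fun x => T x j = 1)).min' (hne j) := Fin.ext h
      rw [this] at hi
      exact htrans i _ j (by rw [hsymm]; exact hi.2) hj.2
    · intro h
      have hsets : (Finset.univ.filter (fun x => T x i = 1))
          = (Finset.univ.filter (fun x => T x j = 1)) := by
        ext x
        simp only [Finset.mem_filter, Finset.mem_univ, true_and]
        constructor
        · intro hx; exact htrans x i j hx h
        · intro hx; exact htrans x j i hx (by rw [hsymm]; exact h)
      have : (Finset.univ.filter (fun x => T x i = 1)).min' (hne i)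
          = (Finset.univ.filter (fun x => T x j = 1)).min' (hne j) := by
        apply le_antisymm
        · exact Finset.min'_le _ _ (by rw [hsets]; exact Finset.min'_mem _ (hne j))
        · exact Finset.min'_le _ _ (by rw [← hsets]; exact Finset.min'_mem _ (hne i))
      exact congrArg Fin.val this
  -- the multiplier system
  refine ⟨fun i j k => if (σ i ≤ σ j ∧ σ j ≤ σ k) ∨ (σ k ≤ σ j ∧ σ j ≤ σ i)
      then (1 : R) else 0, ?_, ?_, ?_, ?_, ?_, ?_⟩
  · intro i j k
    dsimp only
    split <;> simp
  · intro i j k r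
    dsimp only
    split <;> simp
  · intro i k
    have := le_total (σ i) (σ k)
    dsimp only
    rw [if_pos]
    omega
  · intro i k
    have := le_total (σ i) (σ k)
    dsimp only
    rw [if_pos]
    omega
  · intro i j k l
    dsimp only
    have key : ∀ (P Q : Prop) [Decidable P] [Decidable Q],
        ((if P then (1:R) else 0) * (if Q then (1:R) else 0)) = if P ∧ Q then 1 else 0 := by
      intro P Q _ _
      split_ifs <;> simp_all
    rw [key, key]
    exact if_congr (by omega) rfl rfl
  · intro i j
    dsimp only
    by_cases h : T i j = 1
    · have := (hσ_iff i j).2 h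
      rw [if_pos (by omega), h]
    · have hT0 : T i j = 0 := (h01 i j).resolve_right h
      rw [if_neg, hT0]
      intro hc
      have : σ i = σ j := by omega
      exact h ((hσ_iff i j).1 this)
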